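/- Let (X,T) be a topological dynamical system and let α and β be admissible covers of X with α ≺ β (β refines α). Then the symbolic representation (X_β, σ) is an extension of (X_α, σ): there exists a factor map φ : (X_β, σ) → (X_α, σ). -/
import Mathlib


open Filter Topology Function Set

/-- Iterates of a homeomorphism indexed by `ℕ`. -/
def hpowNat {X : Type*} [TopologicalSpace X] (T : X ≃ₜ X) : ℕ → X ≃ₜ X
  | 0 => Homeomorph.refl X
  | n + 1 => (hpowNat T n).trans T

/-- Iterates of a homeomorphism indexed by `ℤ`. -/
def hpowInt {X : Type*} [TopologicalSpace X] (T : X ≃ₜ X) : ℤ → X ≃ₜ X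
  | Int.ofNat n => hpowNat T n
  | Int.negSucc n => (hpowNat T (n + 1)).symm

/-- The `n`-th iterate (`n : ℤ`) of the homeomorphism `T`, as a map. -/
def hpow {X : Type*} [TopologicalSpace X] (T : X ≃ₜ X) (n : ℤ) : X → X :=
  ⇑(hpowInt T n)

/-- A finite family `A` of subsets of `X` is an admissible cover: the sets are closed,
cover `X`, intersect pairwise only in their boundaries, and the union of their
boundaries has empty interior. -/
def IsAdmissibleCover {X : Type*} [TopologicalSpace X] {ι : Type*} (A : ι → Set X) : Prop :=
  (⋃ i, A i) = Set.univ ∧ (∀ i, IsClosed (A i)) ∧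
  (∀ i j, i ≠ j → A i ∩ A j = frontier (A i) ∩ frontier (A j)) ∧
  interior (⋃ i, frontier (A i)) = ∅

/-- The set of orbit points hitting the boundaries of the cover:
`D_α = ⋃_{n ∈ ℤ} Tⁿ (∂α)`. -/
def coverBoundaryOrbit {X : Type*} [TopologicalSpace X] (T : X ≃ₜ X) {k : ℕ}
    (A : Fin k → Set X) : Set X :=
  ⋃ n : ℤ, hpow T n '' (⋃ i, frontier (A i))

/-- The symbolic representation `X_α` of `(X, α)`: the closure in `{0, …, k-1}^ℤ` of the set
of `α`-names of points of `X \ D_α` (the `α`-name `a` of `x` satisfies `Tⁿ x ∈ A (a n)`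
for all `n`). -/
def SymbolicRep {X : Type*} [TopologicalSpace X] (T : X ≃ₜ X) {k : ℕ}
    (A : Fin k → Set X) : Set (ℤ → Fin k) :=
  closure {a : ℤ → Fin k |
    ∃ x : X, x ∉ coverBoundaryOrbit T A ∧ ∀ n : ℤ, hpow T n x ∈ A (a n)}

section Aux

variable {X : Type*} [TopologicalSpace X] (T : X ≃ₜ X)

lemma hpowNat_comm (n : ℕ) (x : X) : hpowNat T n (T x) = T (hpowNat T n x) := by
  induction n with
  | zero => rfl
  | succ n ih => simp [hpowNat, Homeomorph.trans_apply, ih]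

lemma hpow_succ (n : ℤ) (x : X) : hpow T (n + 1) x = T (hpow T n x) := by
  cases n with
  | ofNat m =>
    show hpowInt T ((m : ℤ) + 1) x = T (hpowInt T (Int.ofNat m) x)
    have : ((m : ℤ) + 1) = Int.ofNat (m + 1) := rfl
    rw [this]
    simp [hpowInt, hpowNat, Homeomorph.trans_apply]
  | negSucc m =>
    cases m with
    | zero =>
      show hpowInt T 0 x = T (hpowInt T (Int.negSucc 0) x)
      simp [hpowInt, hpowNat, Homeomorph.refl]
    | succ j =>
      have h1 : Int.negSucc (j + 1) + 1 = Int.negSucc j := by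
        rw [Int.negSucc_eq, Int.negSucc_eq]; push_cast; ring
      rw [h1]
      show (hpowNat T (j + 1)).symm x = T ((hpowNat T (j + 2)).symm x)
      apply (hpowNat T (j + 1)).injective
      rw [Homeomorph.apply_symm_apply, hpowNat_comm]
      have : hpowNat T (j + 2) ((hpowNat T (j + 2)).symm x)
          = T (hpowNat T (j + 1) ((hpowNat T (j + 2)).symm x)) := by
        simp [hpowNat, Homeomorph.trans_apply]
      rw [← this, Homeomorph.apply_symm_apply]

lemma hpowInt_neg (n : ℤ) : hpowInt T (-n) = (hpowInt T n).symm := by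
  cases n with
  | ofNat m =>
    cases m with
    | zero => simp [hpowInt, hpowNat]
    | succ j =>
      have : -(Int.ofNat (j + 1)) = Int.negSucc j := rfl
      rw [this]
      rfl
  | negSucc m =>
    have : -(Int.negSucc m) = Int.ofNat (m + 1) := rfl
    rw [this]
    simp [hpowInt]

lemma hpow_neg_apply (n : ℤ) (x : X) : hpow T (-n) (hpow T n x) = x := by
  rw [hpow, hpow, hpowInt_neg, Homeomorph.symm_apply_apply]

lemma hpow_comm (n : ℤ) (x : X) : hpow T n (T x) = T (hpow T n x) := by
  cases n with
  | ofNat m => exact hpowNat_comm T m x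
  | negSucc m =>
    show (hpowNat T (m + 1)).symm (T x) = T ((hpowNat T (m + 1)).symm x)
    apply (hpowNat T (m + 1)).injective
    rw [Homeomorph.apply_symm_apply, hpowNat_comm, Homeomorph.apply_symm_apply]

lemma mem_D_of_hit {k : ℕ} {A : Fin k → Set X} {x : X} {n : ℤ}
    (h : hpow T n x ∈ ⋃ i, frontier (A i)) : x ∈ coverBoundaryOrbit T A :=
  mem_iUnion.2 ⟨-n, ⟨hpow T n x, h, hpow_neg_apply T n x⟩⟩

lemma unique_index {k : ℕ} {A : Fin k → Set X} (hA : IsAdmissibleCover A) {x : X}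
    (hx : x ∉ coverBoundaryOrbit T A) {n : ℤ} {i j : Fin k}
    (hi : hpow T n x ∈ A i) (hj : hpow T n x ∈ A j) : i = j := by
  by_contra hij
  have := (hA.2.2.1 i j hij) ▸ (Set.mem_inter hi hj)
  exact hx (mem_D_of_hit T (mem_iUnion.2 ⟨i, this.1⟩))

lemma mem_interior_of_name {k : ℕ} {A : Fin k → Set X} (hA : IsAdmissibleCover A) {x : X}
    (hx : x ∉ coverBoundaryOrbit T A) {n : ℤ} {i : Fin k}
    (hi : hpow T n x ∈ A i) : hpow T n x ∈ interior (A i) := by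
  have hfr : hpow T n x ∉ frontier (A i) := fun h =>
    hx (mem_D_of_hit T (mem_iUnion.2 ⟨i, h⟩))
  rw [(hA.2.1 i).frontier_eq] at hfr
  simpa [Set.mem_diff, hi] using hfr

lemma exists_name {k : ℕ} {A : Fin k → Set X} (hA : IsAdmissibleCover A) (y : X) :
    ∃ c : ℤ → Fin k, ∀ n : ℤ, hpow T n y ∈ A (c n) := by
  have h : ∀ n : ℤ, ∃ i, hpow T n y ∈ A i := fun n =>
    mem_iUnion.mp (hA.1 ▸ Set.mem_univ (hpow T n y))
  exact ⟨fun n => (h n).choose, fun n => (h n).choose_spec⟩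

lemma T_notMem_D {k : ℕ} {A : Fin k → Set X} {x : X}
    (hx : x ∉ coverBoundaryOrbit T A) : T x ∉ coverBoundaryOrbit T A := by
  intro h
  obtain ⟨m, hm⟩ := mem_iUnion.mp h
  obtain ⟨z, hz, hzx⟩ := hm
  apply hx
  refine mem_iUnion.2 ⟨m - 1, ⟨z, hz, ?_⟩⟩
  have h1 := hpow_succ T (m - 1) z
  rw [sub_add_cancel] at h1
  have h2 : T (hpow T (m - 1) z) = T x := h1.symm.trans hzx
  exact T.injective h2

end Aux

lemma dense_good {X : Type*} [MetricSpace X] [CompactSpace X] (T : X ≃ₜ X) {k l : ℕ}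
    {A : Fin k → Set X} {B : Fin l → Set X}
    (hA : IsAdmissibleCover A) (hB : IsAdmissibleCover B) :
    Dense ((coverBoundaryOrbit T A ∪ coverBoundaryOrbit T B)ᶜ) := by
  have key : ∀ {m : ℕ} (C : Fin m → Set X), IsAdmissibleCover C → ∀ n : ℤ,
      IsOpen (hpow T n '' (⋃ i, frontier (C i)))ᶜ ∧
      Dense (hpow T n '' (⋃ i, frontier (C i)))ᶜ := by
    intro m C hC n
    have hcl : IsClosed (⋃ i, frontier (C i)) :=
      isClosed_iUnion_of_finite fun i => isClosed_frontier
    have hclim : IsClosed (hpow T n '' (⋃ i, frontier (C i))) :=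
      (hpowInt T n).isClosedMap _ hcl
    refine ⟨hclim.isOpen_compl, ?_⟩
    rw [← interior_eq_empty_iff_dense_compl]
    have : interior (hpow T n '' (⋃ i, frontier (C i)))
        = hpow T n '' interior (⋃ i, frontier (C i)) :=
      ((hpowInt T n).image_interior _).symm
    rw [this, hC.2.2.2, Set.image_empty]
  have hd : Dense (⋂ p : ℤ ⊕ ℤ,
      Sum.elim (fun n => (hpow T n '' (⋃ i, frontier (A i)))ᶜ)
               (fun n => (hpow T n '' (⋃ i, frontier (B i)))ᶜ) p) := by
    apply dense_iInter_of_isOpen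
    · rintro (n | n)
      · exact (key A hA n).1
      · exact (key B hB n).1
    · rintro (n | n)
      · exact (key A hA n).2
      · exact (key B hB n).2
  convert hd using 1
  ext x
  simp only [coverBoundaryOrbit, Set.mem_compl_iff, Set.mem_union, Set.mem_iUnion,
    Set.mem_iInter, not_or, not_exists]
  constructor
  · rintro ⟨h1, h2⟩ (n | n)
    · exact h1 n
    · exact h2 n
  · intro h
    exact ⟨fun n => h (Sum.inl n), fun n => h (Sum.inr n)⟩

/-- Perturbation lemma: any point with a `C`-name avoiding `D_C` can be approximated
(on any finite window of its name) by a point avoiding `D_A ∪ D_B`. -/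
lemma key_perturb {X : Type*} [MetricSpace X] [CompactSpace X] (T : X ≃ₜ X)
    {k l m : ℕ} {A : Fin k → Set X} {B : Fin l → Set X} {C : Fin m → Set X}
    (hA : IsAdmissibleCover A) (hB : IsAdmissibleCover B) (hC : IsAdmissibleCover C)
    {x : X} (hx : x ∉ coverBoundaryOrbit T C) {c : ℤ → Fin m}
    (hc : ∀ n : ℤ, hpow T n x ∈ C (c n)) (I : Finset ℤ) :
    ∃ y : X, y ∉ coverBoundaryOrbit T A ∧ y ∉ coverBoundaryOrbit T B ∧
      ∀ n ∈ I, hpow T n y ∈ C (c n) := by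
  set U : Set X := ⋂ n ∈ I, (hpow T n) ⁻¹' interior (C (c n)) with hU
  have hUopen : IsOpen U :=
    isOpen_biInter_finset fun n _ => isOpen_interior.preimage (hpowInt T n).continuous
  have hxU : x ∈ U :=
    Set.mem_iInter₂.2 fun n _ => mem_interior_of_name T hC hx (hc n)
  obtain ⟨y, hyG, hyU⟩ := (dense_good T hA hB).exists_mem_open hUopen ⟨x, hxU⟩
  rw [Set.mem_compl_iff, Set.mem_union, not_or] at hyG
  exact ⟨y, hyG.1, hyG.2, fun n hn =>
    interior_subset (Set.mem_iInter₂.1 hyU n hn)⟩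

/-- Closure membership criterion in the product topology on `ℤ → Fin k`. -/
lemma mem_closure_of_finite_agree {k : ℕ} {a : ℤ → Fin k} {S : Set (ℤ → Fin k)}
    (h : ∀ I : Finset ℤ, ∃ s ∈ S, ∀ n ∈ I, s n = a n) : a ∈ closure S := by
  rw [mem_closure_iff]
  intro o ho hao
  obtain ⟨I, u, hu, hsub⟩ := isOpen_pi_iff.mp ho a hao
  obtain ⟨s, hsS, hs⟩ := h I
  exact ⟨s, hsub fun n hn => (hs n hn) ▸ (hu n hn).2, hsS⟩

/-- **Lemma A.8.** Let `(X,T)` be a t.d.s. and `α ≺ β` admissible covers of `X` (`β`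
refines `α`). Then the symbolic representation `(X_β, σ)` is an extension of `(X_α, σ)`:
the shift restricts to both, and there is a factor map `φ : (X_β, σ) → (X_α, σ)`. -/
theorem symbolicRep_factor_of_refinement
    {X : Type*} [MetricSpace X] [CompactSpace X] (T : X ≃ₜ X) {k l : ℕ}
    (A : Fin k → Set X) (B : Fin l → Set X)
    (hA : IsAdmissibleCover A) (hB : IsAdmissibleCover B)
    (href : ∀ j, ∃ i, B j ⊆ A i) :
    ∃ (σβ : SymbolicRep T B → SymbolicRep T B) (σα : SymbolicRep T A → SymbolicRep T A),
      (∀ b : SymbolicRep T B, (σβ b : ℤ → Fin l) = fun n => (b : ℤ → Fin l) (n + 1)) ∧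
      (∀ a : SymbolicRep T A, (σα a : ℤ → Fin k) = fun n => (a : ℤ → Fin k) (n + 1)) ∧
      ∃ φ : SymbolicRep T B → SymbolicRep T A,
        Continuous φ ∧ Surjective φ ∧ ∀ b, φ (σβ b) = σα (φ b) := by
  classical
  -- the relabeling map
  set r : Fin l → Fin k := fun j => (href j).choose with hr_def
  have hr : ∀ j, B j ⊆ A (r j) := fun j => (href j).choose_spec
  set R : (ℤ → Fin l) → (ℤ → Fin k) := fun b n => r (b n) with hR_def
  have hRcont : Continuous R :=
    continuous_pi fun n =>
      (continuous_of_discreteTopology (f := r)).comp (continuous_apply n)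
  -- the generating sets
  set Gα : Set (ℤ → Fin k) := {a : ℤ → Fin k |
    ∃ x : X, x ∉ coverBoundaryOrbit T A ∧ ∀ n : ℤ, hpow T n x ∈ A (a n)} with hGα
  set Gβ : Set (ℤ → Fin l) := {b : ℤ → Fin l |
    ∃ x : X, x ∉ coverBoundaryOrbit T B ∧ ∀ n : ℤ, hpow T n x ∈ B (b n)} with hGβ
  have hXα : SymbolicRep T A = closure Gα := rfl
  have hXβ : SymbolicRep T B = closure Gβ := rfl
  -- the shift maps
  set Sβ : (ℤ → Fin l) → (ℤ → Fin l) := fun b n => b (n + 1) with hSβ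
  set Sα : (ℤ → Fin k) → (ℤ → Fin k) := fun a n => a (n + 1) with hSα
  have hSβcont : Continuous Sβ := continuous_pi fun n => continuous_apply (n + 1)
  have hSαcont : Continuous Sα := continuous_pi fun n => continuous_apply (n + 1)
  have hSβG : Sβ '' Gβ ⊆ Gβ := by
    rintro _ ⟨b, ⟨y, hyD, hyn⟩, rfl⟩
    exact ⟨T y, T_notMem_D T hyD, fun n => by
      show hpow T n (T y) ∈ B (b (n + 1))
      rw [hpow_comm, ← hpow_succ]; exact hyn (n + 1)⟩
  have hSαG : Sα '' Gα ⊆ Gα := by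
    rintro _ ⟨a, ⟨y, hyD, hyn⟩, rfl⟩
    exact ⟨T y, T_notMem_D T hyD, fun n => by
      show hpow T n (T y) ∈ A (a (n + 1))
      rw [hpow_comm, ← hpow_succ]; exact hyn (n + 1)⟩
  have hSβmaps : MapsTo Sβ (SymbolicRep T B) (SymbolicRep T B) := by
    intro b hb
    rw [hXβ] at hb ⊢
    exact closure_mono hSβG (image_closure_subset_closure_image hSβcont ⟨b, hb, rfl⟩)
  have hSαmaps : MapsTo Sα (SymbolicRep T A) (SymbolicRep T A) := by
    intro a ha
    rw [hXα] at ha ⊢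
    exact closure_mono hSαG (image_closure_subset_closure_image hSαcont ⟨a, ha, rfl⟩)
  refine ⟨hSβmaps.restrict _ _ _, hSαmaps.restrict _ _ _, fun b => rfl, fun a => rfl, ?_⟩
  -- the factor map
  have hRG : R '' Gβ ⊆ closure Gα := by
    rintro _ ⟨b, ⟨y, hyD, hyn⟩, rfl⟩
    apply mem_closure_of_finite_agree
    intro I
    obtain ⟨y', hy'A, hy'B, hy'n⟩ := key_perturb T hA hB hB hyD hyn I
    obtain ⟨b', hb'⟩ := exists_name T hB y'
    refine ⟨R b', ⟨y', hy'A, fun n => hr (b' n) (hb' n)⟩, fun n hn => ?_⟩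
    have : b' n = b n := unique_index T hB hy'B (hb' n) (hy'n n hn)
    simp [hR_def, this]
  have hRmaps : MapsTo R (SymbolicRep T B) (SymbolicRep T A) := by
    intro b hb
    rw [hXβ] at hb
    rw [hXα]
    have : R b ∈ R '' closure Gβ := ⟨b, hb, rfl⟩
    have h2 : R b ∈ closure (R '' Gβ) := image_closure_subset_closure_image hRcont this
    have h3 : closure (R '' Gβ) ⊆ closure (closure Gα) := closure_mono hRG
    rw [closure_closure] at h3
    exact h3 h2
  refine ⟨hRmaps.restrict _ _ _, hRcont.restrict _, ?_, fun b => rfl⟩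
  -- surjectivity
  have hKcompact : IsCompact (R '' SymbolicRep T B) :=
    ((isClosed_closure.isCompact)).image hRcont
  have hKclosed : IsClosed (R '' SymbolicRep T B) := hKcompact.isClosed
  have hGαK : Gα ⊆ R '' SymbolicRep T B := by
    rintro a ⟨x, hxD, hxn⟩
    rw [← hKclosed.closure_eq]
    apply mem_closure_of_finite_agree
    intro I
    obtain ⟨y, hyA, hyB, hyn⟩ := key_perturb T hA hB hA hxD hxn I
    obtain ⟨b, hb⟩ := exists_name T hB y
    have hbG : b ∈ Gβ := ⟨y, hyB, hb⟩
    refine ⟨R b, ⟨b, subset_closure hbG, rfl⟩, fun n hn => ?_⟩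
    have hin : hpow T n y ∈ A (r (b n)) := hr (b n) (hb n)
    exact unique_index T hA hyA hin (hyn n hn)
  have hsub : SymbolicRep T A ⊆ R '' SymbolicRep T B := by
    rw [hXα]
    exact closure_minimal hGαK hKclosed
  rintro ⟨a, ha⟩
  obtain ⟨b, hb, hRb⟩ := hsub ha
  exact ⟨⟨b, hb⟩, Subtype.ext hRb⟩
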